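/- For infinite matrices A = (a(i,j)) and B = (b(i,j)) with finite A_{p,α} norm (1 ≤ p ≤ ∞, α ≥ 0), the product C = AB satisfies ‖C‖_{A_{p,α}} ≤ 2^α (‖A‖_{A_{p,α}}‖B‖_{A_{1,0}} + ‖A‖_{A_{1,0}}‖B‖_{A_{p,α}}). -/

import Mathlib

open scoped ENNReal

noncomputable def schurNormE (p : ℝ≥0∞) (α : ℝ) (a : ℤ → ℤ → ℝ) : ℝ≥0∞ :=
  if p = ⊤ then
    ⨆ i : ℤ, ⨆ j : ℤ,
      ENNReal.ofReal |a i j| * ENNReal.ofReal (((1 + |i - j| : ℤ) : ℝ) ^ α)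
  else
    max
      (⨆ i : ℤ, (∑' j : ℤ,
        (ENNReal.ofReal |a i j| *
          ENNReal.ofReal (((1 + |i - j| : ℤ) : ℝ) ^ α)) ^ p.toReal) ^ (1 / p.toReal))
      (⨆ j : ℤ, (∑' i : ℤ,
        (ENNReal.ofReal |a i j| *
          ENNReal.ofReal (((1 + |i - j| : ℤ) : ℝ) ^ α)) ^ p.toReal) ^ (1 / p.toReal))

open MeasureTheory

noncomputable def Ew (α : ℝ) (a : ℤ → ℤ → ℝ) (i j : ℤ) : ℝ≥0∞ :=
  ENNReal.ofReal |a i j| * ENNReal.ofReal (((1 + |i - j| : ℤ) : ℝ) ^ α)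

lemma schurNormE_top (α : ℝ) (a : ℤ → ℤ → ℝ) :
    schurNormE ⊤ α a = ⨆ i : ℤ, ⨆ j : ℤ, Ew α a i j := by
  rw [schurNormE, if_pos rfl]; rfl

lemma schurNormE_ne_top {p : ℝ≥0∞} (hp : p ≠ ⊤) (α : ℝ) (a : ℤ → ℤ → ℝ) :
    schurNormE p α a =
      max (⨆ i : ℤ, (∑' j : ℤ, Ew α a i j ^ p.toReal) ^ (1 / p.toReal))
          (⨆ j : ℤ, (∑' i : ℤ, Ew α a i j ^ p.toReal) ^ (1 / p.toReal)) := by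
  rw [schurNormE, if_neg hp]; rfl

lemma schurNormE_one_zero (a : ℤ → ℤ → ℝ) :
    schurNormE 1 0 a = max (⨆ i : ℤ, ∑' j : ℤ, ENNReal.ofReal |a i j|)
      (⨆ j : ℤ, ∑' i : ℤ, ENNReal.ofReal |a i j|) := by
  rw [schurNormE, if_neg ENNReal.one_ne_top]
  simp [Real.rpow_zero, ENNReal.ofReal_one, mul_one, ENNReal.toReal_one, ENNReal.rpow_one]

lemma norm1_row (a : ℤ → ℤ → ℝ) (i : ℤ) :
    ∑' j : ℤ, ENNReal.ofReal |a i j| ≤ schurNormE 1 0 a := by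
  rw [schurNormE_one_zero]
  exact le_trans (le_iSup (fun i => ∑' j : ℤ, ENNReal.ofReal |a i j|) i) (le_max_left _ _)

lemma norm1_col (a : ℤ → ℤ → ℝ) (j : ℤ) :
    ∑' i : ℤ, ENNReal.ofReal |a i j| ≤ schurNormE 1 0 a := by
  rw [schurNormE_one_zero]
  exact le_trans (le_iSup (fun j => ∑' i : ℤ, ENNReal.ofReal |a i j|) j) (le_max_right _ _)

lemma normp_row {p : ℝ≥0∞} (hp : p ≠ ⊤) (α : ℝ) (a : ℤ → ℤ → ℝ) (i : ℤ) :
    (∑' j : ℤ, Ew α a i j ^ p.toReal) ^ (1 / p.toReal) ≤ schurNormE p α a := by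
  rw [schurNormE_ne_top hp]
  exact le_trans (le_iSup (fun i => (∑' j : ℤ, Ew α a i j ^ p.toReal) ^ (1 / p.toReal)) i)
    (le_max_left _ _)

lemma normp_col {p : ℝ≥0∞} (hp : p ≠ ⊤) (α : ℝ) (a : ℤ → ℤ → ℝ) (j : ℤ) :
    (∑' i : ℤ, Ew α a i j ^ p.toReal) ^ (1 / p.toReal) ≤ schurNormE p α a := by
  rw [schurNormE_ne_top hp]
  exact le_trans (le_iSup (fun j => (∑' i : ℤ, Ew α a i j ^ p.toReal) ^ (1 / p.toReal)) j)
    (le_max_right _ _)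

lemma normtop (α : ℝ) (a : ℤ → ℤ → ℝ) (i j : ℤ) : Ew α a i j ≤ schurNormE ⊤ α a := by
  rw [schurNormE_top]
  exact le_trans (le_iSup (fun j => Ew α a i j) j) (le_iSup (fun i => ⨆ j, Ew α a i j) i)

lemma tsum_holder {q r : ℝ} (hqr : q.HolderConjugate r) (f g : ℤ → ℝ≥0∞) :
    ∑' k, f k * g k ≤ (∑' k, f k ^ q) ^ (1/q) * (∑' k, g k ^ r) ^ (1/r) := by
  have h := ENNReal.lintegral_mul_le_Lp_mul_Lq (Measure.count : Measure ℤ) hqr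
    (Measurable.of_discrete (f := f)).aemeasurable (Measurable.of_discrete (f := g)).aemeasurable
  simpa [lintegral_count] using h

lemma tsum_Lp_add {q : ℝ} (hq : 1 ≤ q) (f g : ℤ → ℝ≥0∞) :
    (∑' j, (f j + g j) ^ q) ^ (1/q) ≤ (∑' j, f j ^ q) ^ (1/q) + (∑' j, g j ^ q) ^ (1/q) := by
  have h := ENNReal.lintegral_Lp_add_le (μ := (Measure.count : Measure ℤ))
    (Measurable.of_discrete (f := f)).aemeasurable (Measurable.of_discrete (f := g)).aemeasurable hq
  simpa [lintegral_count] using h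

lemma rpow_one_div_le {q : ℝ} (hq : 0 < q) {x y : ℝ≥0∞} (h : x ^ (1/q) ≤ y) : x ≤ y ^ q := by
  have := ENNReal.rpow_le_rpow h hq.le
  rwa [← ENNReal.rpow_mul, one_div_mul_cancel hq.ne', ENNReal.rpow_one] at this

lemma le_rpow_one_div {q : ℝ} (hq : 0 < q) {x y : ℝ≥0∞} (h : x ≤ y ^ q) : x ^ (1/q) ≤ y := by
  have := ENNReal.rpow_le_rpow h (by positivity : (0:ℝ) ≤ 1/q)
  rwa [← ENNReal.rpow_mul, mul_one_div_cancel hq.ne', ENNReal.rpow_one] at this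

lemma schur1 {q : ℝ} (hq : 1 ≤ q) (f : ℤ → ℝ≥0∞) (M : ℤ → ℤ → ℝ≥0∞) {K : ℝ≥0∞}
    (h1 : ∀ k, ∑' j, M k j ≤ K) (h2 : ∀ j, ∑' k, M k j ≤ K) :
    (∑' j, (∑' k, f k * M k j) ^ q) ^ (1/q) ≤ K * (∑' k, f k ^ q) ^ (1/q) := by
  have hq0 : (0:ℝ) < q := lt_of_lt_of_le one_pos hq
  rcases eq_or_lt_of_le hq with hq1 | hq1
  · subst hq1
    simp only [ENNReal.rpow_one, one_div_one]
    calc ∑' j, ∑' k, f k * M k j = ∑' k, ∑' j, f k * M k j := ENNReal.tsum_comm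
      _ = ∑' k, f k * ∑' j, M k j := by simp [ENNReal.tsum_mul_left]
      _ ≤ ∑' k, f k * K := ENNReal.tsum_le_tsum fun k => mul_le_mul_right (h1 k) _
      _ = K * ∑' k, f k := by rw [ENNReal.tsum_mul_right, mul_comm]
  · set r := Real.conjExponent q with hr
    have hqr : q.HolderConjugate r := Real.HolderConjugate.conjExponent hq1
    have hinv : 1/q + 1/r = 1 := by
      simpa [one_div] using hqr.inv_add_inv_eq_one
    have key : ∀ j, (∑' k, f k * M k j) ^ q ≤ (∑' k, f k ^ q * M k j) * K ^ (q - 1) := by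
      intro j
      have hsplit : ∀ k, f k * M k j = (f k * (M k j) ^ (1/q)) * ((M k j) ^ (1/r)) := by
        intro k
        rw [mul_assoc, ← ENNReal.rpow_add_of_nonneg _ _ hqr.one_div_nonneg hqr.symm.one_div_nonneg,
          hinv, ENNReal.rpow_one]
      have h := tsum_holder hqr (fun k => f k * (M k j) ^ (1/q)) (fun k => (M k j) ^ (1/r))
      have e1 : ∀ k, (f k * (M k j) ^ (1/q)) ^ q = f k ^ q * M k j := by
        intro k
        rw [ENNReal.mul_rpow_of_nonneg _ _ hq0.le, ← ENNReal.rpow_mul,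
          one_div_mul_cancel hq0.ne', ENNReal.rpow_one]
      have e2 : ∀ k, ((M k j) ^ (1/r)) ^ r = M k j := by
        intro k
        rw [← ENNReal.rpow_mul, one_div_mul_cancel hqr.symm.ne_zero, ENNReal.rpow_one]
      simp only [e1, e2] at h
      calc (∑' k, f k * M k j) ^ q
          = (∑' k, (f k * (M k j) ^ (1/q)) * ((M k j) ^ (1/r))) ^ q := by
            rw [tsum_congr hsplit]
        _ ≤ ((∑' k, f k ^ q * M k j) ^ (1/q) * (∑' k, M k j) ^ (1/r)) ^ q :=
            ENNReal.rpow_le_rpow h hq0.le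
        _ = (∑' k, f k ^ q * M k j) * ((∑' k, M k j) ^ (1/r)) ^ q := by
            rw [ENNReal.mul_rpow_of_nonneg _ _ hq0.le, ← ENNReal.rpow_mul,
              one_div_mul_cancel hq0.ne', ENNReal.rpow_one]
        _ ≤ (∑' k, f k ^ q * M k j) * (K ^ (1/r)) ^ q :=
            mul_le_mul_right (ENNReal.rpow_le_rpow
              (ENNReal.rpow_le_rpow (h2 j) hqr.symm.one_div_nonneg) hq0.le) _
        _ = (∑' k, f k ^ q * M k j) * K ^ (q - 1) := by
            rw [← ENNReal.rpow_mul]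
            congr 1
            rw [one_div, mul_comm, ← div_eq_mul_inv, hqr.div_conj_eq_sub_one]
    have main : ∑' j, (∑' k, f k * M k j) ^ q ≤ K ^ q * ∑' k, f k ^ q := by
      calc ∑' j, (∑' k, f k * M k j) ^ q
          ≤ ∑' j, (∑' k, f k ^ q * M k j) * K ^ (q - 1) :=
            ENNReal.tsum_le_tsum key
        _ = (∑' k, f k ^ q * ∑' j, M k j) * K ^ (q - 1) := by
            rw [ENNReal.tsum_mul_right, ENNReal.tsum_comm]
            congr 1
            exact tsum_congr fun k => (ENNReal.tsum_mul_left).symm ▸ rfl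
        _ ≤ (∑' k, f k ^ q * K) * K ^ (q - 1) := by
            gcongr with k
            exact h1 k
        _ = K ^ q * ∑' k, f k ^ q := by
            have hKK : K * K ^ (q - 1) = K ^ q := by
              nth_rewrite 1 [← ENNReal.rpow_one K]
              rw [← ENNReal.rpow_add_of_nonneg _ _ zero_le_one (by linarith)]
              norm_num
            rw [ENNReal.tsum_mul_right, mul_assoc, hKK, mul_comm]

    refine le_rpow_one_div hq0 ?_
    calc ∑' j, (∑' k, f k * M k j) ^ q ≤ K ^ q * ∑' k, f k ^ q := main
      _ = (K * (∑' k, f k ^ q) ^ (1/q)) ^ q := by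
          rw [ENNReal.mul_rpow_of_nonneg _ _ hq0.le, ← ENNReal.rpow_mul,
            one_div_mul_cancel hq0.ne', ENNReal.rpow_one]

lemma schur2 {q : ℝ} (hq : 1 ≤ q) (f : ℤ → ℝ≥0∞) (h : ℤ → ℤ → ℝ≥0∞) {F N : ℝ≥0∞}
    (hf : ∑' k, f k ≤ F) (hN : ∀ k, ∑' j, h k j ^ q ≤ N ^ q) :
    (∑' j, (∑' k, f k * h k j) ^ q) ^ (1/q) ≤ F * N := by
  have hq0 : (0:ℝ) < q := lt_of_lt_of_le one_pos hq
  rcases eq_or_lt_of_le hq with hq1 | hq1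
  · subst hq1
    simp only [ENNReal.rpow_one, one_div_one] at *
    calc ∑' j, ∑' k, f k * h k j = ∑' k, f k * ∑' j, h k j := by
          rw [ENNReal.tsum_comm]; exact tsum_congr fun k => ENNReal.tsum_mul_left
      _ ≤ ∑' k, f k * N := ENNReal.tsum_le_tsum fun k => mul_le_mul_right (hN k) _
      _ = (∑' k, f k) * N := ENNReal.tsum_mul_right
      _ ≤ F * N := mul_le_mul_left hf _
  · set r := Real.conjExponent q with hr
    have hqr : q.HolderConjugate r := Real.HolderConjugate.conjExponent hq1
    have hinv : 1/q + 1/r = 1 := by simpa [one_div] using hqr.inv_add_inv_eq_one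
    have key : ∀ j, (∑' k, f k * h k j) ^ q ≤ F ^ (q - 1) * ∑' k, f k * h k j ^ q := by
      intro j
      have hsplit : ∀ k, f k * h k j = (f k) ^ (1/r) * ((f k) ^ (1/q) * h k j) := by
        intro k
        rw [← mul_assoc, ← ENNReal.rpow_add_of_nonneg _ _ hqr.symm.one_div_nonneg
          hqr.one_div_nonneg, add_comm (1/r), hinv, ENNReal.rpow_one]
      have hh := tsum_holder hqr.symm (fun k => (f k) ^ (1/r)) (fun k => (f k) ^ (1/q) * h k j)
      have e1 : ∀ k, ((f k) ^ (1/r)) ^ r = f k := by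
        intro k
        rw [← ENNReal.rpow_mul, one_div_mul_cancel hqr.symm.ne_zero, ENNReal.rpow_one]
      have e2 : ∀ k, ((f k) ^ (1/q) * h k j) ^ q = f k * h k j ^ q := by
        intro k
        rw [ENNReal.mul_rpow_of_nonneg _ _ hq0.le, ← ENNReal.rpow_mul,
          one_div_mul_cancel hq0.ne', ENNReal.rpow_one]
      simp only [e1, e2] at hh
      calc (∑' k, f k * h k j) ^ q
          = (∑' k, (f k) ^ (1/r) * ((f k) ^ (1/q) * h k j)) ^ q := by rw [tsum_congr hsplit]
        _ ≤ ((∑' k, f k) ^ (1/r) * (∑' k, f k * h k j ^ q) ^ (1/q)) ^ q :=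
            ENNReal.rpow_le_rpow hh hq0.le
        _ = ((∑' k, f k) ^ (1/r)) ^ q * (∑' k, f k * h k j ^ q) := by
            rw [ENNReal.mul_rpow_of_nonneg _ _ hq0.le, ← ENNReal.rpow_mul (∑' k, f k * h k j ^ q),
              one_div_mul_cancel hq0.ne', ENNReal.rpow_one]
        _ ≤ (F ^ (1/r)) ^ q * (∑' k, f k * h k j ^ q) :=
            mul_le_mul_left (ENNReal.rpow_le_rpow
              (ENNReal.rpow_le_rpow hf hqr.symm.one_div_nonneg) hq0.le) _
        _ = F ^ (q - 1) * ∑' k, f k * h k j ^ q := by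
            rw [← ENNReal.rpow_mul]
            congr 2
            rw [one_div, mul_comm, ← div_eq_mul_inv, hqr.div_conj_eq_sub_one]
    have main : ∑' j, (∑' k, f k * h k j) ^ q ≤ (F * N) ^ q := by
      calc ∑' j, (∑' k, f k * h k j) ^ q
          ≤ ∑' j, F ^ (q - 1) * ∑' k, f k * h k j ^ q := ENNReal.tsum_le_tsum key
        _ = F ^ (q - 1) * ∑' k, f k * ∑' j, h k j ^ q := by
            rw [ENNReal.tsum_mul_left, ENNReal.tsum_comm]
            congr 1
            exact tsum_congr fun k => ENNReal.tsum_mul_left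
        _ ≤ F ^ (q - 1) * ∑' k, f k * N ^ q :=
            mul_le_mul_right (ENNReal.tsum_le_tsum fun k => mul_le_mul_right (hN k) _) _
        _ ≤ F ^ (q - 1) * (F * N ^ q) := by
            rw [ENNReal.tsum_mul_right]
            exact mul_le_mul_right (mul_le_mul_left hf _) _
        _ = (F * N) ^ q := by
            rw [ENNReal.mul_rpow_of_nonneg _ _ hq0.le, ← mul_assoc]
            congr 1
            nth_rewrite 2 [← ENNReal.rpow_one F]
            rw [← ENNReal.rpow_add_of_nonneg _ _ (by linarith) zero_le_one]
            norm_num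
    exact le_rpow_one_div hq0 main

lemma wkey {α : ℝ} (hα : 0 ≤ α) (i j k : ℤ) :
    ENNReal.ofReal (((1 + |i - j| : ℤ) : ℝ) ^ α) ≤ ENNReal.ofReal ((2:ℝ) ^ α) *
      (ENNReal.ofReal (((1 + |i - k| : ℤ) : ℝ) ^ α) +
       ENNReal.ofReal (((1 + |k - j| : ℤ) : ℝ) ^ α)) := by
  set x : ℝ := ((1 + |i - k| : ℤ) : ℝ) with hx
  set y : ℝ := ((1 + |k - j| : ℤ) : ℝ) with hy
  have hx1 : (1:ℝ) ≤ x := by rw [hx]; exact_mod_cast le_add_of_nonneg_right (abs_nonneg _)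
  have hy1 : (1:ℝ) ≤ y := by rw [hy]; exact_mod_cast le_add_of_nonneg_right (abs_nonneg _)
  have hx0 : (0:ℝ) ≤ x := le_trans zero_le_one hx1
  have hy0 : (0:ℝ) ≤ y := le_trans zero_le_one hy1
  have habs : |i - j| ≤ |i - k| + |k - j| := by
    have : i - j = (i - k) + (k - j) := by ring
    rw [this]; exact abs_add_le _ _
  have h1 : ((1 + |i - j| : ℤ) : ℝ) ≤ x + y := by
    rw [hx, hy]
    push_cast
    have : (|i - j| : ℝ) ≤ (|i - k| : ℤ) + (|k - j| : ℤ) := by exact_mod_cast habs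
    push_cast at this
    linarith
  have h2 : x + y ≤ 2 * max x y := by
    rcases le_total x y with h | h
    · rw [max_eq_right h]; linarith
    · rw [max_eq_left h]; linarith
  have hreal : ((1 + |i - j| : ℤ) : ℝ) ^ α ≤ (2:ℝ) ^ α * (x ^ α + y ^ α) := by
    have hb : (0:ℝ) ≤ ((1 + |i - j| : ℤ) : ℝ) := by positivity
    calc ((1 + |i - j| : ℤ) : ℝ) ^ α ≤ (2 * max x y) ^ α :=
          Real.rpow_le_rpow hb (le_trans h1 h2) hα
      _ = (2:ℝ) ^ α * (max x y) ^ α := Real.mul_rpow (by norm_num) (le_trans hx0 (le_max_left _ _))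
      _ ≤ (2:ℝ) ^ α * (x ^ α + y ^ α) := by
          have : (max x y) ^ α ≤ x ^ α + y ^ α := by
            rcases le_total x y with h | h
            · rw [max_eq_right h]
              exact le_add_of_nonneg_left (Real.rpow_nonneg hx0 α)
            · rw [max_eq_left h]
              exact le_add_of_nonneg_right (Real.rpow_nonneg hy0 α)
          exact mul_le_mul_of_nonneg_left this (Real.rpow_nonneg (by norm_num) α)
  calc ENNReal.ofReal (((1 + |i - j| : ℤ) : ℝ) ^ α)
      ≤ ENNReal.ofReal ((2:ℝ) ^ α * (x ^ α + y ^ α)) := ENNReal.ofReal_le_ofReal hreal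
    _ = ENNReal.ofReal ((2:ℝ) ^ α) * (ENNReal.ofReal (x ^ α) + ENNReal.ofReal (y ^ α)) := by
        rw [ENNReal.ofReal_mul (Real.rpow_nonneg (by norm_num) α),
          ENNReal.ofReal_add (Real.rpow_nonneg hx0 α) (Real.rpow_nonneg hy0 α)]

lemma ofReal_abs_tsum_le (f : ℤ → ℝ) :
    ENNReal.ofReal |∑' k, f k| ≤ ∑' k, ENNReal.ofReal |f k| := by
  by_cases hf : Summable f
  · have habs : Summable (fun k => |f k|) := hf.abs
    have h2 : |∑' k, f k| ≤ ∑' k, |f k| := by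
      simpa [Real.norm_eq_abs] using
        norm_tsum_le_tsum_norm (f := f) (by simpa [Real.norm_eq_abs] using habs)
    calc ENNReal.ofReal |∑' k, f k| ≤ ENNReal.ofReal (∑' k, |f k|) :=
          ENNReal.ofReal_le_ofReal h2
      _ = ∑' k, ENNReal.ofReal |f k| :=
          ENNReal.ofReal_tsum_of_nonneg (fun k => abs_nonneg _) habs
  · rw [tsum_eq_zero_of_not_summable hf]
    simp

lemma entry_le {α : ℝ} (hα : 0 ≤ α) (a b : ℤ → ℤ → ℝ) (i j : ℤ) :
    Ew α (fun i j => ∑' k : ℤ, a i k * b k j) i j ≤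
      ENNReal.ofReal ((2:ℝ)^α) *
        ((∑' k : ℤ, Ew α a i k * ENNReal.ofReal |b k j|) +
         (∑' k : ℤ, ENNReal.ofReal |a i k| * Ew α b k j)) := by
  have step1 : Ew α (fun i j => ∑' k : ℤ, a i k * b k j) i j ≤
      ∑' k : ℤ, (ENNReal.ofReal |a i k| * ENNReal.ofReal |b k j|) *
        ENNReal.ofReal (((1 + |i - j| : ℤ) : ℝ) ^ α) := by
    simp only [Ew]
    rw [ENNReal.tsum_mul_right]
    refine mul_le_mul_left ?_ _
    calc ENNReal.ofReal |∑' k : ℤ, a i k * b k j| ≤ ∑' k : ℤ, ENNReal.ofReal |a i k * b k j| :=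
        ofReal_abs_tsum_le _
      _ = ∑' k : ℤ, ENNReal.ofReal |a i k| * ENNReal.ofReal |b k j| := by
        refine tsum_congr fun k => ?_
        rw [abs_mul, ENNReal.ofReal_mul (abs_nonneg _)]
  refine le_trans step1 ?_
  have step2 : ∀ k : ℤ, (ENNReal.ofReal |a i k| * ENNReal.ofReal |b k j|) *
      ENNReal.ofReal (((1 + |i - j| : ℤ) : ℝ) ^ α) ≤
      ENNReal.ofReal ((2:ℝ)^α) *
        (Ew α a i k * ENNReal.ofReal |b k j| + ENNReal.ofReal |a i k| * Ew α b k j) := by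
    intro k
    calc (ENNReal.ofReal |a i k| * ENNReal.ofReal |b k j|) *
        ENNReal.ofReal (((1 + |i - j| : ℤ) : ℝ) ^ α)
        ≤ (ENNReal.ofReal |a i k| * ENNReal.ofReal |b k j|) *
          (ENNReal.ofReal ((2:ℝ)^α) * (ENNReal.ofReal (((1 + |i - k| : ℤ) : ℝ) ^ α) +
            ENNReal.ofReal (((1 + |k - j| : ℤ) : ℝ) ^ α))) :=
          mul_le_mul_right (wkey hα i j k) _
      _ = ENNReal.ofReal ((2:ℝ)^α) *
          (Ew α a i k * ENNReal.ofReal |b k j| + ENNReal.ofReal |a i k| * Ew α b k j) := by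
          simp only [Ew]; ring
  calc ∑' k : ℤ, (ENNReal.ofReal |a i k| * ENNReal.ofReal |b k j|) *
        ENNReal.ofReal (((1 + |i - j| : ℤ) : ℝ) ^ α)
      ≤ ∑' k : ℤ, ENNReal.ofReal ((2:ℝ)^α) *
          (Ew α a i k * ENNReal.ofReal |b k j| + ENNReal.ofReal |a i k| * Ew α b k j) :=
        ENNReal.tsum_le_tsum step2
    _ = ENNReal.ofReal ((2:ℝ)^α) *
        ((∑' k : ℤ, Ew α a i k * ENNReal.ofReal |b k j|) +
         (∑' k : ℤ, ENNReal.ofReal |a i k| * Ew α b k j)) := by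
        rw [ENNReal.tsum_mul_left, ENNReal.tsum_add]

theorem stmt12 (p : ℝ≥0∞) (hp : 1 ≤ p) (α : ℝ) (hα : 0 ≤ α) (a b : ℤ → ℤ → ℝ)
    (ha : schurNormE p α a ≠ ⊤) (hb : schurNormE p α b ≠ ⊤) :
    schurNormE p α (fun i j => ∑' k : ℤ, a i k * b k j) ≤
      ENNReal.ofReal ((2 : ℝ) ^ α) *
        (schurNormE p α a * schurNormE 1 0 b + schurNormE 1 0 a * schurNormE p α b) := by
  by_cases hptop : p = ⊤
  · subst hptop
    rw [schurNormE_top]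
    refine iSup_le fun i => iSup_le fun j => ?_
    refine le_trans (entry_le hα a b i j) (mul_le_mul_right (add_le_add ?_ ?_) _)
    · calc ∑' k : ℤ, Ew α a i k * ENNReal.ofReal |b k j|
          ≤ ∑' k : ℤ, schurNormE ⊤ α a * ENNReal.ofReal |b k j| :=
            ENNReal.tsum_le_tsum fun k => mul_le_mul_left (normtop α a i k) _
        _ = schurNormE ⊤ α a * ∑' k : ℤ, ENNReal.ofReal |b k j| := ENNReal.tsum_mul_left
        _ ≤ schurNormE ⊤ α a * schurNormE 1 0 b := mul_le_mul_right (norm1_col b j) _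
    · calc ∑' k : ℤ, ENNReal.ofReal |a i k| * Ew α b k j
          ≤ ∑' k : ℤ, ENNReal.ofReal |a i k| * schurNormE ⊤ α b :=
            ENNReal.tsum_le_tsum fun k => mul_le_mul_right (normtop α b k j) _
        _ = (∑' k : ℤ, ENNReal.ofReal |a i k|) * schurNormE ⊤ α b := ENNReal.tsum_mul_right
        _ ≤ schurNormE 1 0 a * schurNormE ⊤ α b := mul_le_mul_left (norm1_row a i) _
  · set q := p.toReal with hqdef
    have hq : 1 ≤ q := by
      rw [hqdef, ← ENNReal.toReal_one]
      exact ENNReal.toReal_mono hptop hp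
    have hq0 : (0:ℝ) < q := lt_of_lt_of_le one_pos hq
    set t := ENNReal.ofReal ((2:ℝ)^α) with htdef
    set Na := schurNormE p α a with hNa
    set Nb := schurNormE p α b with hNb
    set Na1 := schurNormE 1 0 a with hNa1
    set Nb1 := schurNormE 1 0 b with hNb1
    have pull : ∀ X : ℤ → ℝ≥0∞, (∑' j : ℤ, (t * X j) ^ q) ^ (1/q) = t * (∑' j, X j ^ q) ^ (1/q) := by
      intro X
      have e : ∀ j, (t * X j) ^ q = t ^ q * X j ^ q :=
        fun j => ENNReal.mul_rpow_of_nonneg _ _ hq0.le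
      rw [tsum_congr e, ENNReal.tsum_mul_left,
        ENNReal.mul_rpow_of_nonneg _ _ (by positivity : (0:ℝ) ≤ 1/q),
        ← ENNReal.rpow_mul, mul_one_div_cancel hq0.ne', ENNReal.rpow_one]
    rw [schurNormE_ne_top hptop]
    refine max_le (iSup_le fun i => ?_) (iSup_le fun j => ?_)
    · -- row estimate
      calc (∑' j : ℤ, Ew α (fun i j => ∑' k : ℤ, a i k * b k j) i j ^ q) ^ (1/q)
          ≤ (∑' j : ℤ, (t * ((∑' k : ℤ, Ew α a i k * ENNReal.ofReal |b k j|) +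
              (∑' k : ℤ, ENNReal.ofReal |a i k| * Ew α b k j))) ^ q) ^ (1/q) := by
            refine ENNReal.rpow_le_rpow (ENNReal.tsum_le_tsum fun j => ?_) (by positivity)
            exact ENNReal.rpow_le_rpow (entry_le hα a b i j) hq0.le
        _ = t * (∑' j : ℤ, ((∑' k : ℤ, Ew α a i k * ENNReal.ofReal |b k j|) +
              (∑' k : ℤ, ENNReal.ofReal |a i k| * Ew α b k j)) ^ q) ^ (1/q) := pull _
        _ ≤ t * ((∑' j : ℤ, (∑' k : ℤ, Ew α a i k * ENNReal.ofReal |b k j|) ^ q) ^ (1/q) +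
              (∑' j : ℤ, (∑' k : ℤ, ENNReal.ofReal |a i k| * Ew α b k j) ^ q) ^ (1/q)) :=
            mul_le_mul_right (tsum_Lp_add hq _ _) _
        _ ≤ t * (Na * Nb1 + Na1 * Nb) := by
            refine mul_le_mul_right (add_le_add ?_ ?_) _
            · calc (∑' j : ℤ, (∑' k : ℤ, Ew α a i k * ENNReal.ofReal |b k j|) ^ q) ^ (1/q)
                  ≤ Nb1 * (∑' k : ℤ, Ew α a i k ^ q) ^ (1/q) :=
                    schur1 hq (fun k => Ew α a i k) (fun k j => ENNReal.ofReal |b k j|)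
                      (norm1_row b) (norm1_col b)
                _ ≤ Nb1 * Na := mul_le_mul_right (normp_row hptop α a i) _
                _ = Na * Nb1 := mul_comm _ _
            · exact schur2 hq (fun k => ENNReal.ofReal |a i k|) (fun k j => Ew α b k j)
                (norm1_row a i) (fun k => rpow_one_div_le hq0 (normp_row hptop α b k))
    · -- column estimate
      calc (∑' i : ℤ, Ew α (fun i j => ∑' k : ℤ, a i k * b k j) i j ^ q) ^ (1/q)
          ≤ (∑' i : ℤ, (t * ((∑' k : ℤ, Ew α a i k * ENNReal.ofReal |b k j|) +
              (∑' k : ℤ, ENNReal.ofReal |a i k| * Ew α b k j))) ^ q) ^ (1/q) := by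
            refine ENNReal.rpow_le_rpow (ENNReal.tsum_le_tsum fun i => ?_) (by positivity)
            exact ENNReal.rpow_le_rpow (entry_le hα a b i j) hq0.le
        _ = t * (∑' i : ℤ, ((∑' k : ℤ, Ew α a i k * ENNReal.ofReal |b k j|) +
              (∑' k : ℤ, ENNReal.ofReal |a i k| * Ew α b k j)) ^ q) ^ (1/q) := pull _
        _ ≤ t * ((∑' i : ℤ, (∑' k : ℤ, Ew α a i k * ENNReal.ofReal |b k j|) ^ q) ^ (1/q) +
              (∑' i : ℤ, (∑' k : ℤ, ENNReal.ofReal |a i k| * Ew α b k j) ^ q) ^ (1/q)) :=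
            mul_le_mul_right (tsum_Lp_add hq _ _) _
        _ ≤ t * (Na * Nb1 + Na1 * Nb) := by
            refine mul_le_mul_right (add_le_add ?_ ?_) _
            · have comm : ∀ i : ℤ, (∑' k : ℤ, Ew α a i k * ENNReal.ofReal |b k j|) =
                  ∑' k : ℤ, ENNReal.ofReal |b k j| * Ew α a i k :=
                fun i => tsum_congr fun k => mul_comm _ _
              simp only [comm]
              calc (∑' i : ℤ, (∑' k : ℤ, ENNReal.ofReal |b k j| * Ew α a i k) ^ q) ^ (1/q)
                  ≤ Nb1 * Na := schur2 hq (fun k => ENNReal.ofReal |b k j|)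
                    (fun k i => Ew α a i k) (norm1_col b j)
                    (fun k => rpow_one_div_le hq0 (normp_col hptop α a k))
                _ = Na * Nb1 := mul_comm _ _
            · have comm : ∀ i : ℤ, (∑' k : ℤ, ENNReal.ofReal |a i k| * Ew α b k j) =
                  ∑' k : ℤ, Ew α b k j * ENNReal.ofReal |a i k| :=
                fun i => tsum_congr fun k => mul_comm _ _
              simp only [comm]
              calc (∑' i : ℤ, (∑' k : ℤ, Ew α b k j * ENNReal.ofReal |a i k|) ^ q) ^ (1/q)
                  ≤ Na1 * (∑' k : ℤ, Ew α b k j ^ q) ^ (1/q) :=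
                    schur1 hq (fun k => Ew α b k j) (fun k i => ENNReal.ofReal |a i k|)
                      (norm1_col a) (norm1_row a)
                _ ≤ Na1 * Nb := mul_le_mul_right (normp_col hptop α b j) _
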